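/- arXiv:2204.12871 — 2 statements merged into one kernel-verified Lean document; each statement's English description precedes it below -/
import Mathlib

section
/- Let B be a rare basis in ℝⁿ each of whose intervals has dyadic side lengths, let S₁,…,Sₙ ⊂ ℤ be infinite sets, and suppose the spectrum of B is dense in S₁×⋯×Sₙ. Then for every k ∈ ℕ there exist increasing sequences (s_{1,m})_{m=0}^k,…,(s_{n,m})_{m=0}^k with members from S₁,…,Sₙ respectively such that for every n-tuple (m₁,…,mₙ) ∈ {1,…,k}ⁿ there exists an interval R₁×⋯×Rₙ ∈ B with |R_j| ∈ (2^{s_{j,m_j−1}}, 2^{s_{j,m_j}}] for every j = 1,…,n. -/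
open MeasureTheory Set
open scoped ENNReal

noncomputable section

/-- An axis-parallel interval (box) in `ℝⁿ`, given by its left and right endpoints. -/
structure BoxInterval (n : ℕ) where
  a : Fin n → ℝ
  b : Fin n → ℝ
  hab : ∀ j, a j < b j

namespace BoxInterval

/-- The underlying set of a box. -/
def toSet {n : ℕ} (R : BoxInterval n) : Set (Fin n → ℝ) :=
  Set.univ.pi fun j => Set.Icc (R.a j) (R.b j)

/-- The side length of a box in direction `j`. -/
def side {n : ℕ} (R : BoxInterval n) (j : Fin n) : ℝ := R.b j - R.a j

/-- Translation of a box by a vector `v`. -/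
def translate {n : ℕ} (R : BoxInterval n) (v : Fin n → ℝ) : BoxInterval n where
  a := fun j => R.a j + v j
  b := fun j => R.b j + v j
  hab := fun j => by have h := R.hab j; linarith

end BoxInterval

/-- A rare basis in `ℝⁿ`: a nonempty translation-invariant collection of intervals. -/
def IsRareBasis {n : ℕ} (B : Set (BoxInterval n)) : Prop :=
  B.Nonempty ∧ ∀ R ∈ B, ∀ v : Fin n → ℝ, R.translate v ∈ B

/-- The geometric maximal operator `M_B` associated with a collection `B` of boxes:
`M_B f (x) = sup { (1/|R|) ∫_R |f| : x ∈ R ∈ B }`. -/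
def maxOp {n : ℕ} (B : Set (BoxInterval n)) (f : (Fin n → ℝ) → ℝ)
    (x : Fin n → ℝ) : ℝ≥0∞ :=
  ⨆ (R : BoxInterval n) (_ : R ∈ B) (_ : x ∈ R.toSet),
    (∫⁻ y in R.toSet, ENNReal.ofReal |f y| ∂volume) / volume R.toSet

/-- The spectrum `W_B ⊂ ℤⁿ` of a collection of boxes: all tuples
`(⌈log₂ |R₁|⌉, …, ⌈log₂ |Rₙ|⌉)` over boxes `R₁ × ⋯ × Rₙ ∈ B`. -/
def spectrumB {n : ℕ} (B : Set (BoxInterval n)) : Set (Fin n → ℤ) :=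
  {w | ∃ R ∈ B, ∀ j, w j = ⌈Real.logb 2 (R.side j)⌉}

/-- The slice `W_t` of `W ⊂ ℤ^{k+1}` over `t ∈ ℤᵏ`. -/
def sliceZ {k : ℕ} (W : Set (Fin (k + 1) → ℤ)) (t : Fin k → ℤ) : Set ℤ :=
  {τ | Fin.snoc t τ ∈ W}

/-- `W` is a net for `S` in `ℤ^{k+1}`: every slice of `W` is a one-dimensional
net for the corresponding slice of `S`. -/
def IsNetMulti {k : ℕ} (W S : Set (Fin (k + 1) → ℤ)) : Prop :=
  ∀ t : Fin k → ℤ, ∃ N : ℕ, ∀ τ ∈ sliceZ S t, ∃ w ∈ sliceZ W t, |τ - w| ≤ (N : ℤ)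

/-- Projection of `W ⊂ ℤⁿ` onto the first `k` coordinates. -/
def projZ {n : ℕ} (k : ℕ) (hk : k ≤ n) (W : Set (Fin n → ℤ)) : Set (Fin k → ℤ) :=
  (fun w (i : Fin k) => w (Fin.castLE hk i)) '' W

/-- `W ⊂ ℤⁿ` is dense in `S₁ × ⋯ × Sₙ`: for each `k`, `π_{k+1}(W)` is a net for
`π_k(W) × S_{k+1}`. -/
def IsDenseIn {n : ℕ} (W : Set (Fin n → ℤ)) (S : Fin n → Set ℤ) : Prop :=
  ∀ k : Fin n,
    IsNetMulti (projZ (k.val + 1) k.isLt W)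
      {v : Fin (k.val + 1) → ℤ |
        Fin.init v ∈ projZ k.val (Nat.le_of_lt k.isLt) W ∧ v (Fin.last k.val) ∈ S k}

/-- `Ω_{n,k}`: the set of `n`-tuples of positive integers summing to `k`. -/
def OmegaNK (n k : ℕ) : Set (Fin n → ℕ) :=
  {m | (∀ j, 1 ≤ m j) ∧ ∑ j, m j = k}

/-- The smallest box concentric with `R`, containing `R`, with dyadic side lengths. -/
def dyadicHull {n : ℕ} (R : BoxInterval n) : BoxInterval n where
  a := fun j => (R.a j + R.b j) / 2 - (2:ℝ) ^ ⌈Real.logb 2 (R.side j)⌉ / 2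
  b := fun j => (R.a j + R.b j) / 2 + (2:ℝ) ^ ⌈Real.logb 2 (R.side j)⌉ / 2
  hab := fun j => by
    have h : (0:ℝ) < (2:ℝ) ^ ⌈Real.logb 2 (R.side j)⌉ := by positivity
    linarith

/-- The dyadic skeleton `B_d` of a collection `B`. -/
def dyadicSkeleton {n : ℕ} (B : Set (BoxInterval n)) : Set (BoxInterval n) :=
  {Rd | ∃ R ∈ B, Rd = dyadicHull R}

/-- `B` is `Ω`-complete (for `Ω ⊆ Ω_{n,k}`). -/
def OmegaComplete {n : ℕ} (B : Set (BoxInterval n)) (k : ℕ) (Ω : Set (Fin n → ℕ)) : Prop :=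
  ∃ s : Fin n → ℕ → ℤ,
    (∀ j, ∀ m, m < k → s j m < s j (m + 1)) ∧
    ∀ m ∈ Ω, ∃ R ∈ dyadicSkeleton B, ∀ j,
      R.side j ∈ Set.Ioc ((2:ℝ) ^ s j (m j - 1)) ((2:ℝ) ^ s j (m j))

/-- Product of an `n`-dimensional box and a one-dimensional box. -/
def prodBox {n : ℕ} (J1 : BoxInterval n) (J2 : BoxInterval 1) : BoxInterval (n + 1) where
  a := Fin.snoc J1.a (J2.a 0)
  b := Fin.snoc J1.b (J2.b 0)
  hab := fun j => by
    induction j using Fin.lastCases with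
    | last => simpa using J2.hab 0
    | cast i => simpa using J1.hab i

/-- The product basis `B₁ × B₂`. -/
def prodBasis {n : ℕ} (B1 : Set (BoxInterval n)) (B2 : Set (BoxInterval 1)) :
    Set (BoxInterval (n + 1)) :=
  {R | ∃ J1 ∈ B1, ∃ J2 ∈ B2, R = prodBox J1 J2}

/-- The (is)-property of a rare basis in `ℝ²`. -/
def ISProperty (B : Set (BoxInterval 2)) : Prop :=
  ∀ k : ℕ, ∃ R : Fin (k + 1) → BoxInterval 2,
    (∀ i, R i ∈ B) ∧
    (∀ i, (R i).a = fun _ => 0) ∧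
    (∀ i, ∃ pq : Fin 2 → ℤ, ∀ l, (R i).b l = (2:ℝ) ^ pq l) ∧
    (∀ i j, i ≠ j → ∀ v : Fin 2 → ℝ, ¬ ((R i).translate v).toSet ⊆ (R j).toSet) ∧
    (∀ i j, ∃ Q ∈ B, Q.toSet = (R i).toSet ∩ (R j).toSet)

/-! ### Auxiliary lemmas for `statement2` -/

private lemma myInfiniteCases (S : Set ℤ) (hS : S.Infinite) :
    (∀ a : ℤ, ∃ x ∈ S, a < x) ∨ (∀ a : ℤ, ∃ x ∈ S, x < a) := by
  by_contra h
  push_neg at h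
  obtain ⟨⟨a, ha⟩, ⟨b, hb⟩⟩ := h
  exact hS (Set.Finite.subset (Set.finite_Icc b a) fun x hx => ⟨hb x hx, ha x hx⟩)

private def mySeqAux (g : ℤ → ℤ) (N x0 : ℤ) : ℕ → ℤ × ℤ
  | 0 => (x0, x0)
  | m + 1 =>
      let τ := g ((mySeqAux g N x0 m).1 + N)
      (g (τ + N), τ)

private lemma myLemA1 (S : Set ℤ) (hub : ∀ a : ℤ, ∃ x ∈ S, a < x) (N : ℤ) :
    ∃ s τ : ℕ → ℤ, (∀ m, s m ∈ S) ∧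
      ∀ m, τ (m + 1) ∈ S ∧ s m + N < τ (m + 1) ∧ τ (m + 1) + N < s (m + 1) := by
  obtain ⟨x0, hx0, -⟩ := hub 0
  choose g hgS hglt using hub
  refine ⟨fun m => (mySeqAux g N x0 m).1, fun m => (mySeqAux g N x0 m).2, ?_, ?_⟩
  · intro m
    induction m with
    | zero => exact hx0
    | succ m ih => exact hgS _
  · intro m
    refine ⟨hgS _, hglt _, hglt _⟩

private lemma myLemA (S : Set ℤ) (hS : S.Infinite) (N : ℤ) (k : ℕ) :
    ∃ s τ : ℕ → ℤ, (∀ m, m ≤ k → s m ∈ S) ∧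
      ∀ m, 1 ≤ m → m ≤ k → τ m ∈ S ∧ s (m - 1) + N < τ m ∧ τ m + N < s m := by
  rcases myInfiniteCases S hS with h | h
  · obtain ⟨s, τ, hs, hτ⟩ := myLemA1 S h N
    refine ⟨s, τ, fun m _ => hs m, fun m hm1 hmk => ?_⟩
    obtain ⟨m, rfl⟩ : ∃ m', m = m' + 1 := ⟨m - 1, by omega⟩
    simpa using hτ m
  · have h' : ∀ a : ℤ, ∃ x ∈ (fun x : ℤ => -x) '' S, a < x := by
      intro a
      obtain ⟨x, hx, hlt⟩ := h (-a)
      exact ⟨-x, ⟨x, hx, rfl⟩, by omega⟩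
    obtain ⟨s', τ', hs', hτ'⟩ := myLemA1 _ h' N
    refine ⟨fun m => -s' (k - m), fun m => -τ' (k - m + 1), ?_, ?_⟩
    · intro m hm
      show -s' (k - m) ∈ S
      obtain ⟨x, hx, hxe⟩ := hs' (k - m)
      rw [show -s' (k - m) = x by rw [← hxe, neg_neg]]
      exact hx
    · intro m hm1 hmk
      obtain ⟨hτS, h1, h2⟩ := hτ' (k - m)
      have hkm : k - (m - 1) = k - m + 1 := by omega
      refine ⟨?_, ?_, ?_⟩
      · show -τ' (k - m + 1) ∈ S
        obtain ⟨x, hx, hxe⟩ := hτS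
        rw [show -τ' (k - m + 1) = x by rw [← hxe, neg_neg]]
        exact hx
      · show -s' (k - (m - 1)) + N < -τ' (k - m + 1)
        rw [hkm]; omega
      · show -τ' (k - m + 1) + N < -s' (k - m)
        omega

private lemma myMainComb (n : ℕ) (W : Set (Fin n → ℤ)) (hW : W.Nonempty)
    (S : Fin n → Set ℤ) (hS : ∀ j, (S j).Infinite)
    (hdense : IsDenseIn W S) (k : ℕ) :
    ∀ K : ℕ, (hK : K ≤ n) →
      ∃ s : Fin K → ℕ → ℤ,
        (∀ i m, m ≤ k → s i m ∈ S (Fin.castLE hK i)) ∧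
        (∀ i m, m < k → s i m < s i (m + 1)) ∧
        ∀ m : Fin K → ℕ, (∀ i, 1 ≤ m i ∧ m i ≤ k) →
          ∃ u ∈ projZ K hK W, ∀ i, s i (m i - 1) < u i ∧ u i ≤ s i (m i) := by
  intro K
  induction K with
  | zero =>
      intro hK
      refine ⟨fun _ _ => 0, fun i => i.elim0, fun i => i.elim0, fun m _ => ?_⟩
      obtain ⟨w, hw⟩ := hW
      exact ⟨fun i => w (Fin.castLE hK i), ⟨w, hw, rfl⟩, fun i => i.elim0⟩
  | succ K ih =>
      intro hK1
      have hKn : K < n := hK1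
      have hK : K ≤ n := le_of_lt hKn
      obtain ⟨s, hsS, hsMono, hsW⟩ := ih hK
      -- choose a witness `u m` in the projection for every admissible multi-index `m`
      have huEx : ∀ m : Fin K → ℕ, ∃ u : Fin K → ℤ,
          (∀ i, 1 ≤ m i ∧ m i ≤ k) →
            u ∈ projZ K hK W ∧ ∀ i, s i (m i - 1) < u i ∧ u i ≤ s i (m i) := by
        intro m
        by_cases hm : ∀ i, 1 ≤ m i ∧ m i ≤ k
        · obtain ⟨u, hu1, hu2⟩ := hsW m hm
          exact ⟨u, fun _ => ⟨hu1, hu2⟩⟩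
        · exact ⟨fun _ => 0, fun h => absurd h hm⟩
      choose u hu using huEx
      -- net constants
      have hd := hdense ⟨K, hKn⟩
      choose Nf hNf using fun m : Fin K → ℕ => hd (u m)
      set F : Finset (Fin K → ℕ) := Fintype.piFinset fun _ => Finset.Icc 1 k with hF
      set Nmax : ℕ := F.sup Nf with hNmax
      obtain ⟨s', τ', hs'S, hτ'⟩ := myLemA (S ⟨K, hKn⟩) (hS _) (Nmax : ℤ) k
      refine ⟨Fin.snoc s s', ?_, ?_, ?_⟩
      · intro i m hm
        induction i using Fin.lastCases with
        | last =>
            rw [Fin.snoc_last]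
            exact hs'S m hm
        | cast i =>
            rw [Fin.snoc_castSucc]
            exact hsS i m hm
      · intro i m hm
        induction i using Fin.lastCases with
        | last =>
            rw [Fin.snoc_last]
            obtain ⟨-, h1, h2⟩ := hτ' (m + 1) (by omega) (by omega)
            have : (0 : ℤ) ≤ (Nmax : ℤ) := Int.natCast_nonneg _
            simp only [Nat.add_sub_cancel] at h1
            omega
        | cast i =>
            rw [Fin.snoc_castSucc]
            exact hsMono i m hm
      · intro m hm
        set m0 : Fin K → ℕ := Fin.init m with hm0def
        have hm0 : ∀ i, 1 ≤ m0 i ∧ m0 i ≤ k := fun i => hm (Fin.castSucc i)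
        obtain ⟨huW, huI⟩ := hu m0 hm0
        set mlast : ℕ := m (Fin.last K) with hmlast
        have hml : 1 ≤ mlast ∧ mlast ≤ k := hm (Fin.last K)
        obtain ⟨hτS, hτ1, hτ2⟩ := hτ' mlast hml.1 hml.2
        have hτslice : τ' mlast ∈ sliceZ
            {v : Fin (K + 1) → ℤ |
              Fin.init v ∈ projZ K (Nat.le_of_lt hKn) W ∧ v (Fin.last K) ∈ S ⟨K, hKn⟩}
            (u m0) := by
          constructor
          · rw [Fin.init_snoc]
            exact huW
          · rw [Fin.snoc_last]
            exact hτS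
        obtain ⟨w, hwslice, hwnear⟩ := hNf m0 (τ' mlast) hτslice
        have hm0F : m0 ∈ F := by
          rw [hF, Fintype.mem_piFinset]
          intro i
          rw [Finset.mem_Icc]
          exact hm0 i
        have hle : Nf m0 ≤ Nmax := Finset.le_sup hm0F
        refine ⟨Fin.snoc (u m0) w, hwslice, ?_⟩
        intro i
        induction i using Fin.lastCases with
        | last =>
            rw [Fin.snoc_last, Fin.snoc_last, ← hmlast]
            have hle' : (Nf m0 : ℤ) ≤ (Nmax : ℤ) := Int.ofNat_le.mpr hle
            rw [abs_le] at hwnear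
            constructor <;> omega
        | cast i =>
            rw [Fin.snoc_castSucc, Fin.snoc_castSucc]
            exact huI i


/-- Lemma 1: if all boxes of the rare basis `B` have dyadic side lengths and the spectrum of
`B` is dense in `S₁ × ⋯ × Sₙ`, then for every `k` there are increasing sequences
`(s_{j,m})_{m=0}^k` in `S_j` such that every `(m₁,…,mₙ) ∈ {1,…,k}ⁿ` is realized by a box
`R ∈ B` with `|R_j| ∈ (2^{s_{j,m_j-1}}, 2^{s_{j,m_j}}]`. -/
theorem statement2 (n : ℕ) (hn : 1 ≤ n) (B : Set (BoxInterval n)) (hB : IsRareBasis B)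
    (hdyadic : ∀ R ∈ B, ∀ j, ∃ t : ℤ, R.side j = (2:ℝ) ^ t)
    (S : Fin n → Set ℤ) (hS : ∀ j, (S j).Infinite)
    (hdense : IsDenseIn (spectrumB B) S) :
    ∀ k : ℕ, ∃ s : Fin n → ℕ → ℤ,
      (∀ j, ∀ m, m < k → s j m < s j (m + 1)) ∧
      (∀ j, ∀ m, m ≤ k → s j m ∈ S j) ∧
      ∀ m : Fin n → ℕ, (∀ j, 1 ≤ m j ∧ m j ≤ k) →
        ∃ R ∈ B, ∀ j,
          R.side j ∈ Set.Ioc ((2:ℝ) ^ s j (m j - 1)) ((2:ℝ) ^ s j (m j)) := by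
  intro k
  have hWne : (spectrumB B).Nonempty := by
    obtain ⟨R, hR⟩ := hB.1
    exact ⟨fun j => ⌈Real.logb 2 (R.side j)⌉, R, hR, fun j => rfl⟩
  obtain ⟨s, hsS, hsMono, hsW⟩ :=
    myMainComb n (spectrumB B) hWne S hS hdense k n (le_refl n)
  refine ⟨s, hsMono, fun j m hm => hsS j m hm, ?_⟩
  intro m hm
  obtain ⟨u, huW, huI⟩ := hsW m hm
  obtain ⟨w, hwW, hwe⟩ := huW
  have hwu : w = u := hwe
  subst hwu
  obtain ⟨R, hR, hRw⟩ := hwW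
  refine ⟨R, hR, fun j => ?_⟩
  obtain ⟨t, ht⟩ := hdyadic R hR j
  have hcw : w j = t := by
    rw [hRw j, ht, show ((2:ℝ)^t) = (2:ℝ) ^ (t:ℝ) by rw [Real.rpow_intCast],
      Real.logb_rpow (by norm_num) (by norm_num)]
    exact Int.ceil_intCast t
  have hseq : R.side j = (2:ℝ) ^ (w j) := by rw [hcw, ht]
  obtain ⟨h1, h2⟩ := huI j
  constructor
  · rw [hseq]
    gcongr
    norm_num
  · rw [hseq]
    gcongr
    norm_num


end
end

section
/- Let S₁,…,Sₙ ⊂ ℤ be infinite sets and let B be the basis consisting of all n-dimensional intervals with side lengths of the form 2^{s₁},…,2^{sₙ} where s₁ ∈ S₁,…,sₙ ∈ Sₙ. Then there is a constant cₙ > 0 depending only on n such that for every α ∈ (0,1) there exists a bounded measurable set E ⊂ ℝⁿ of positive Lebesgue measure with |{x ∈ ℝⁿ : M_B(χ_E)(x) > α}| ≥ cₙ · (1/α) · (1 + log(1/α))^{n−1} · |E|. -/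
open MeasureTheory Set
open scoped ENNReal

noncomputable section

open scoped Pointwise

lemma mem_vadd_real (c : ℝ) (A : Set ℝ) (x : ℝ) : x ∈ c +ᵥ A ↔ x - c ∈ A := by
  rw [Set.mem_vadd_set_iff_neg_vadd_mem]
  norm_num [vadd_eq_add, neg_add_eq_sub]

lemma vadd_Ico_real (c a b : ℝ) : c +ᵥ Set.Ico a b = Set.Ico (c+a) (c+b) := by
  ext x; rw [mem_vadd_real]; simp only [Set.mem_Ico]
  constructor <;> intro h <;> constructor <;> linarith [h.1, h.2]

def gapN (s : ℕ → ℤ) (m : ℕ) : ℕ := (s (m+1) - s m - 1).toNat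

def Vset (s : ℕ → ℤ) (a : ℕ) : ℕ → Set ℝ
  | 0 => Set.Ico 0 ((2:ℝ)^(s a))
  | (m+1) =>
    if m + 1 ≤ a then Set.Ico 0 ((2:ℝ)^(s a))
    else ⋃ i ∈ Finset.range (2^(gapN s m)), (((i : ℝ) * (2:ℝ)^(s m + 1)) +ᵥ Vset s a m)

lemma Vset_of_le (s : ℕ → ℤ) {a m : ℕ} (h : m ≤ a) : Vset s a m = Set.Ico 0 ((2:ℝ)^(s a)) := by
  cases m with
  | zero => rfl
  | succ m => rw [Vset, if_pos h]

lemma Vset_succ (s : ℕ → ℤ) {a m : ℕ} (h : a ≤ m) :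
    Vset s a (m+1) = ⋃ i ∈ Finset.range (2^(gapN s m)), (((i : ℝ) * (2:ℝ)^(s m + 1)) +ᵥ Vset s a m) := by
  rw [Vset, if_neg (by omega)]

lemma gap_mul (s : ℕ → ℤ) {m : ℕ} (h : s m < s (m+1)) :
    ((2:ℝ)^(gapN s m) : ℝ) * (2:ℝ)^(s m + 1) = (2:ℝ)^(s (m+1)) := by
  have h0 : (0:ℤ) ≤ s (m+1) - s m - 1 := by omega
  have : ((2:ℝ)^(gapN s m) : ℝ) = (2:ℝ)^((s (m+1) - s m - 1 : ℤ)) := by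
    rw [← zpow_natCast, gapN, Int.toNat_of_nonneg h0]
  rw [this, ← zpow_add₀ (by norm_num : (2:ℝ) ≠ 0)]
  ring_nf

lemma Vset_subset (s : ℕ → ℤ) {a m : ℕ} (hm : ∀ i, i < m → s i < s (i+1)) (h : a ≤ m) :
    Vset s a m ⊆ Set.Ico 0 ((2:ℝ)^(s m)) := by
  induction m with
  | zero => interval_cases a; exact (Vset_of_le s le_rfl).subset
  | succ m ih =>
    rcases Nat.eq_or_lt_of_le h with h' | h'
    · rw [← h', Vset_of_le s le_rfl]
    · have ha : a ≤ m := by omega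
      rw [Vset_succ s ha]
      intro x hx
      simp only [Set.mem_iUnion, Finset.mem_range] at hx
      obtain ⟨i, hi, hx⟩ := hx
      rw [mem_vadd_real] at hx
      have hx' := ih (fun i h => hm i (by omega)) ha hx
      have hL : (0:ℝ) < (2:ℝ)^(s m) := by positivity
      have hmul := gap_mul s (hm m (by omega))
      have hiR : ((i:ℝ)+1) ≤ (2:ℝ)^(gapN s m) := by
        exact_mod_cast Nat.succ_le_of_lt hi
      constructor
      · have := hx'.1
        have : (0:ℝ) ≤ (i:ℝ) * (2:ℝ)^(s m + 1) := by positivity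
        linarith [hx'.1]
      · have h2 : (2:ℝ)^(s m + 1) = 2 * (2:ℝ)^(s m) := by
          rw [zpow_add₀ (by norm_num : (2:ℝ) ≠ 0)]; ring
        have : (i:ℝ) * (2:ℝ)^(s m + 1) + (2:ℝ)^(s m) ≤ (2:ℝ)^(s (m+1)) := by
          rw [← hmul]
          nlinarith [hx'.2, hL]
        linarith [hx'.2]

lemma Vset_measurable (s : ℕ → ℤ) (a m : ℕ) : MeasurableSet (Vset s a m) := by
  induction m with
  | zero => cases a <;> exact measurableSet_Ico
  | succ m ih =>
    by_cases h : m + 1 ≤ a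
    · rw [Vset_of_le s h]; exact measurableSet_Ico
    · rw [Vset_succ s (by omega)]
      exact Finset.measurableSet_biUnion _ (fun i _ => MeasurableSet.const_vadd ih _)

lemma Ico_translates_disjoint {A : Set ℝ} {L D : ℝ} (hA : A ⊆ Set.Ico 0 L) (hLD : L ≤ D)
    {i j : ℕ} (hij : i ≠ j) :
    Disjoint (((i:ℝ)*D) +ᵥ A) (((j:ℝ)*D) +ᵥ A) := by
  rw [Set.disjoint_left]
  intro z hzi hzj
  rw [mem_vadd_real] at hzi hzj
  have h1 := hA hzi; have h2 := hA hzj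
  simp only [Set.mem_Ico] at h1 h2
  rcases lt_or_gt_of_ne hij with h | h
  · have : ((i:ℝ)+1) ≤ (j:ℝ) := by exact_mod_cast Nat.succ_le_of_lt h
    nlinarith [h1.1, h1.2, h2.1, h2.2]
  · have : ((j:ℝ)+1) ≤ (i:ℝ) := by exact_mod_cast Nat.succ_le_of_lt h
    nlinarith [h1.1, h1.2, h2.1, h2.2]

lemma gap_pow (s : ℕ → ℤ) {m : ℕ} (h : s m < s (m+1)) :
    ((2:ℝ)^(gapN s m) : ℝ) = (2:ℝ)^((s (m+1) - s m - 1 : ℤ)) := by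
  rw [← zpow_natCast, gapN, Int.toNat_of_nonneg (by omega)]

lemma Vset_volume (s : ℕ → ℤ) {a m : ℕ} (hm : ∀ i, i < m → s i < s (i+1)) (h : a ≤ m) :
    volume (Vset s a m) = ENNReal.ofReal ((2:ℝ)^(s m - ((m:ℤ) - a))) := by
  induction m with
  | zero =>
    interval_cases a
    show volume (Set.Ico 0 ((2:ℝ)^(s 0))) = _
    rw [Real.volume_Ico]; norm_num
  | succ m ih =>
    rcases Nat.eq_or_lt_of_le h with h' | h'
    · subst h'
      rw [Vset_of_le s le_rfl, Real.volume_Ico]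
      norm_num
    · have ha : a ≤ m := by omega
      have hsm := hm m (by omega)
      have h2 : (0:ℝ) < (2:ℝ)^(s m) := by positivity
      rw [Vset_succ s ha,
        measure_biUnion_finset
          (fun i _ j _ hij => Ico_translates_disjoint
            (Vset_subset s (fun i hi => hm i (by omega)) ha)
            (by rw [zpow_add₀ (by norm_num : (2:ℝ) ≠ 0)]; nlinarith) hij)
          (fun i _ => MeasurableSet.const_vadd (Vset_measurable s a m) _)]
      simp only [measure_vadd]
      rw [ih (fun i hi => hm i (by omega)) ha, Finset.sum_const, Finset.card_range,
        nsmul_eq_mul]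
      rw [show ((2^(gapN s m) : ℕ) : ℝ≥0∞) = ENNReal.ofReal ((2:ℝ)^(gapN s m)) by
        rw [← ENNReal.ofReal_natCast]; norm_num]
      rw [← ENNReal.ofReal_mul (by positivity)]
      congr 1
      rw [gap_pow s hsm, ← zpow_add₀ (by norm_num : (2:ℝ) ≠ 0)]
      congr 1
      push_cast
      ring

lemma Vset_mono_succ (s : ℕ → ℤ) {a m : ℕ} (hm : ∀ i, i < m → s i < s (i+1)) (h : a + 1 ≤ m) :
    Vset s a m ⊆ Vset s (a+1) m := by
  induction m with
  | zero => omega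
  | succ m ih =>
    rcases Nat.eq_or_lt_of_le h with h' | h'
    · rw [← h', Vset_of_le s le_rfl]
      exact Vset_subset s (fun i hi => hm i (by omega)) (by omega)
    · have ha : a + 1 ≤ m := by omega
      rw [Vset_succ s (by omega), Vset_succ s (by omega)]
      refine Set.iUnion₂_mono fun i hi => ?_
      intro x hx
      rw [mem_vadd_real] at hx ⊢
      exact ih (fun i hi => hm i (by omega)) ha hx

lemma Vset_mono (s : ℕ → ℤ) {a b m : ℕ} (hm : ∀ i, i < m → s i < s (i+1)) (hab : a ≤ b)
    (h : b ≤ m) : Vset s a m ⊆ Vset s b m := by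
  induction b with
  | zero => rw [Nat.le_zero] at hab; rw [hab]
  | succ b ih =>
    rcases Nat.eq_or_lt_of_le hab with h' | h'
    · rw [h']
    · exact (ih (by omega) (by omega)).trans (Vset_mono_succ s hm h)

lemma Vset_block (s : ℕ → ℤ) {a m : ℕ} (hm : ∀ i, i < m → s i < s (i+1)) (h : a ≤ m)
    {y : ℝ} (hy : y ∈ Vset s a m) :
    ∃ x : ℝ, 0 ≤ x ∧ x + (2:ℝ)^(s a) ≤ (2:ℝ)^(s m) ∧ y ∈ Set.Ico x (x + (2:ℝ)^(s a)) ∧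
      volume (Vset s 0 m ∩ Set.Ico x (x + (2:ℝ)^(s a)))
        = ENNReal.ofReal ((2:ℝ)^(s a - (a:ℤ))) := by
  revert hy
  induction m generalizing y with
  | zero =>
    intro hy
    interval_cases a
    refine ⟨0, le_rfl, by norm_num, by rw [Vset_of_le s le_rfl] at hy; simpa using hy, ?_⟩
    rw [zero_add, Set.inter_eq_left.mpr (Vset_of_le s le_rfl).subset,
      Vset_volume s hm le_rfl]
    norm_num
  | succ m ih =>
    intro hy
    rcases Nat.eq_or_lt_of_le h with h' | h'
    · subst h'
      refine ⟨0, le_rfl, by norm_num, ?_, ?_⟩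
      · rw [Vset_of_le s le_rfl] at hy; simpa using hy
      · rw [zero_add,
          Set.inter_eq_left.mpr (Vset_subset s hm (Nat.zero_le _)),
          Vset_volume s hm (Nat.zero_le _)]
        norm_num
    · have ha : a ≤ m := by omega
      have hm' : ∀ i, i < m → s i < s (i+1) := fun i hi => hm i (by omega)
      have hsm := hm m (by omega)
      rw [Vset_succ s ha] at hy
      simp only [Set.mem_iUnion, Finset.mem_range] at hy
      obtain ⟨i, hi, hyi⟩ := hy
      rw [mem_vadd_real] at hyi
      obtain ⟨x', hx0, hxe, hyx, hvol⟩ := ih hm' ha hyi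
      set D : ℝ := (2:ℝ)^(s m + 1) with hD
      set c : ℝ := (i:ℝ) * D with hc
      have h2m : (0:ℝ) < (2:ℝ)^(s m) := by positivity
      have hDm : D = 2 * (2:ℝ)^(s m) := by rw [hD, zpow_add₀ two_ne_zero]; ring
      have hc0 : (0:ℝ) ≤ c := by rw [hc, hDm]; positivity
      have hiR : ((i:ℝ)+1) ≤ (2:ℝ)^(gapN s m) := by exact_mod_cast Nat.succ_le_of_lt hi
      have hmul := gap_mul s hsm
      simp only [Set.mem_Ico] at hyx
      refine ⟨c + x', by positivity, ?_, ?_, ?_⟩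
      · have hcb : c + (2:ℝ)^(s m) ≤ (2:ℝ)^(s (m+1)) := by nlinarith
        linarith
      · simp only [Set.mem_Ico]; constructor <;> linarith [hyx.1, hyx.2]
      · have hinter : Vset s 0 (m+1) ∩ Set.Ico (c + x') (c + x' + (2:ℝ)^(s a))
            = (c +ᵥ Vset s 0 m) ∩ Set.Ico (c + x') (c + x' + (2:ℝ)^(s a)) := by
          apply Set.Subset.antisymm
          · rw [Vset_succ s (Nat.zero_le m)]
            rintro z ⟨hz1, hz2⟩
            simp only [Set.mem_iUnion, Finset.mem_range] at hz1
            obtain ⟨j, hj, hzj⟩ := hz1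
            rcases eq_or_ne j i with rfl | hne
            · exact ⟨hzj, hz2⟩
            · exfalso
              rw [mem_vadd_real] at hzj
              have hzj' := Vset_subset s hm' (Nat.zero_le m) hzj
              simp only [Set.mem_Ico] at hzj' hz2
              rcases lt_or_gt_of_ne hne with hlt | hlt
              · have hji : ((j:ℝ)+1) ≤ (i:ℝ) := by exact_mod_cast Nat.succ_le_of_lt hlt
                nlinarith [hzj'.1, hzj'.2, hz2.1, hz2.2]
              · have hji : ((i:ℝ)+1) ≤ (j:ℝ) := by exact_mod_cast Nat.succ_le_of_lt hlt
                nlinarith [hzj'.1, hzj'.2, hz2.1, hz2.2]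
          · refine Set.inter_subset_inter_left _ ?_
            rw [Vset_succ s (Nat.zero_le m)]
            intro z hz
            simp only [Set.mem_iUnion]
            exact ⟨i, Finset.mem_range.mpr hi, hz⟩
        rw [hinter,
          show Set.Ico (c + x') (c + x' + (2:ℝ)^(s a))
              = c +ᵥ Set.Ico x' (x' + (2:ℝ)^(s a)) by rw [vadd_Ico_real, add_assoc],
          ← Set.vadd_set_inter, measure_vadd]
        exact hvol

lemma prod_zpow_sum {ι : Type*} (x : ℝ) (hx : x ≠ 0) (s : Finset ι) (f : ι → ℤ) :
    ∏ i ∈ s, x ^ f i = x ^ (∑ i ∈ s, f i) := by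
  induction s using Finset.cons_induction with
  | empty => simp
  | cons a s ha ih => rw [Finset.prod_cons, Finset.sum_cons, zpow_add₀ hx, ih]

lemma alpha_pow_bounds {α : ℝ} (h0 : 0 < α) (h1 : α < 1) :
    ∃ k : ℕ, α < (2:ℝ)^(-(k:ℤ)) ∧ 1/α ≤ (2:ℝ)^((k:ℤ)+1) ∧
      Real.logb 2 (1/α) ≤ (k:ℝ)+1 ∧ 0 < Real.logb 2 (1/α) := by
  set L := Real.logb 2 (1/α) with hLdef
  have hα : 1 < 1/α := by rw [lt_div_iff₀ h0]; linarith
  have hL : 0 < L := Real.logb_pos one_lt_two hα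
  have hceil : 1 ≤ ⌈L⌉ := by
    have : (0:ℤ) < ⌈L⌉ := Int.ceil_pos.mpr hL
    omega
  refine ⟨(⌈L⌉ - 1).toNat, ?_, ?_, ?_, hL⟩
  all_goals
    have hk : (((⌈L⌉ - 1).toNat : ℕ) : ℤ) = ⌈L⌉ - 1 := Int.toNat_of_nonneg (by omega)
  · -- α < 2^{-k}
    have hkL : (((⌈L⌉ - 1).toNat : ℕ) : ℝ) < L := by
      have h2 : ((⌈L⌉:ℝ)) < L + 1 := Int.ceil_lt_add_one L
      have h3 : (((⌈L⌉ - 1).toNat : ℕ) : ℝ) = (⌈L⌉:ℝ) - 1 := by exact_mod_cast congrArg (fun z : ℤ => (z:ℝ)) hk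
      rw [h3]; linarith
    have hpow : (2:ℝ)^(((⌈L⌉ - 1).toNat : ℕ) : ℤ) < 1/α := by
      have h4 : (2:ℝ)^((((⌈L⌉ - 1).toNat : ℕ) : ℝ)) < (2:ℝ)^L :=
        (Real.rpow_lt_rpow_left_iff one_lt_two).mpr hkL
      rw [Real.rpow_logb (by positivity) (by norm_num) (by positivity)] at h4
      calc (2:ℝ)^(((⌈L⌉ - 1).toNat : ℕ) : ℤ) = (2:ℝ)^((((⌈L⌉ - 1).toNat : ℕ) : ℝ)) := by
            rw [Real.rpow_natCast]; norm_cast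
        _ < 1/α := h4
    rw [zpow_neg]
    have hp : (0:ℝ) < (2:ℝ)^(((⌈L⌉ - 1).toNat : ℕ) : ℤ) := by positivity
    refine (mul_lt_mul_iff_left₀ hp).mp ?_
    rw [inv_mul_cancel₀ hp.ne']
    calc α * (2:ℝ)^(((⌈L⌉ - 1).toNat : ℕ) : ℤ) < α * (1/α) :=
          mul_lt_mul_of_pos_left hpow h0
      _ = 1 := by field_simp
  · -- 1/α ≤ 2^{k+1}
    have hLle : L ≤ (((⌈L⌉ - 1).toNat : ℕ) : ℝ) + 1 := by
      have h3 : (((⌈L⌉ - 1).toNat : ℕ) : ℝ) = (⌈L⌉:ℝ) - 1 := by exact_mod_cast congrArg (fun z : ℤ => (z:ℝ)) hk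
      rw [h3]; linarith [Int.le_ceil L]
    have h4 : (1:ℝ)/α ≤ (2:ℝ)^((((⌈L⌉ - 1).toNat : ℕ) : ℝ) + 1) := by
      have := (Real.rpow_le_rpow_left_iff one_lt_two).mpr hLle
      rwa [Real.rpow_logb (by positivity) (by norm_num) (by positivity)] at this
    calc (1:ℝ)/α ≤ (2:ℝ)^((((⌈L⌉ - 1).toNat : ℕ) : ℝ) + 1) := h4
      _ = (2:ℝ)^((((⌈L⌉ - 1).toNat : ℕ) : ℤ) + 1) := by
          rw [← Real.rpow_intCast]; norm_num
  · -- logb bound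
    have h3 : (((⌈L⌉ - 1).toNat : ℕ) : ℝ) = (⌈L⌉:ℝ) - 1 := by exact_mod_cast congrArg (fun z : ℤ => (z:ℝ)) hk
    rw [h3]; linarith [Int.le_ceil L]


lemma le_maxOp_aux {n : ℕ} (B : Set (BoxInterval n)) (f : (Fin n → ℝ) → ℝ) (x : Fin n → ℝ)
    (R : BoxInterval n) (hR : R ∈ B) (hx : x ∈ R.toSet) :
    (∫⁻ y in R.toSet, ENNReal.ofReal |f y| ∂volume) / volume R.toSet ≤ maxOp B f x :=
  le_iSup_of_le R (le_iSup_of_le hR (le_iSup_of_le hx le_rfl))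

lemma box_toSet_measurable {n : ℕ} (R : BoxInterval n) : MeasurableSet R.toSet :=
  MeasurableSet.univ_pi fun _ => measurableSet_Icc

lemma lintegral_indicator_inter {n : ℕ} {E T : Set (Fin n → ℝ)} (hE : MeasurableSet E)
    (hT : MeasurableSet T) :
    ∫⁻ y in T, ENNReal.ofReal |E.indicator (fun _ => (1:ℝ)) y| ∂volume = volume (E ∩ T) := by
  have h : (fun y => ENNReal.ofReal |E.indicator (fun _ => (1:ℝ)) y|)
      = E.indicator (fun _ => (1:ℝ≥0∞)) := by
    funext y; by_cases hy : y ∈ E <;> simp [hy]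
  rw [h, lintegral_indicator hE, setLIntegral_one, Measure.restrict_apply hE]

lemma lambda_card (m k q : ℕ) (hq1 : 1 ≤ q) (hsum : m * q + 1 ≤ k) (hqk : q ≤ k) :
    q ^ m ≤ ((Fintype.piFinset (fun _ : Fin (m+1) => Finset.range (k+1))).filter
      (fun lam => (∀ j, 1 ≤ lam j) ∧ ∑ j, lam j = k)).card := by
  classical
  have hcard : (Fintype.piFinset (fun _ : Fin m => Finset.Icc 1 q)).card = q ^ m := by
    rw [Fintype.card_piFinset]
    simp [Nat.card_Icc]
  set ψ : (Fin m → ℕ) → (Fin (m+1) → ℕ) := fun μ => Fin.snoc μ (k - ∑ i, μ i) with hψ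
  have hinj : Set.InjOn ψ (Fintype.piFinset (fun _ : Fin m => Finset.Icc 1 q)) := by
    intro μ1 _ μ2 _ hEq
    funext i
    have := congrFun hEq (Fin.castSucc i)
    simpa [hψ] using this
  rw [← hcard, ← Finset.card_image_of_injOn hinj]
  apply Finset.card_le_card
  intro lam hlam
  simp only [Finset.mem_image] at hlam
  obtain ⟨μ, hμ, rfl⟩ := hlam
  have hμ' : ∀ i, 1 ≤ μ i ∧ μ i ≤ q := fun i => by
    have := Fintype.mem_piFinset.mp hμ i
    simpa [Finset.mem_Icc] using this
  have hsμ : ∑ i, μ i ≤ m * q :=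
    (Finset.sum_le_sum (fun i (_ : i ∈ Finset.univ) => (hμ' i).2)).trans (by simp [mul_comm])
  have hsum2 : ∑ j, ψ μ j = k := by
    rw [hψ, Fin.sum_univ_castSucc]
    simp only [Fin.snoc_castSucc, Fin.snoc_last]
    omega
  refine Finset.mem_filter.mpr ⟨?_, fun j => ?_, hsum2⟩
  · refine Fintype.mem_piFinset.mpr fun j => Finset.mem_range.mpr (Nat.lt_succ_of_le ?_)
    induction j using Fin.lastCases with
    | last => simp only [hψ, Fin.snoc_last]; omega
    | cast i =>
      simp only [hψ, Fin.snoc_castSucc]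
      exact (hμ' i).2.trans hqk
  · induction j using Fin.lastCases with
    | last => simp only [hψ, Fin.snoc_last]; omega
    | cast i =>
      simp only [hψ, Fin.snoc_castSucc]
      exact (hμ' i).1


lemma creal_small_aux (m k : ℕ) (α L : ℝ) (hα0 : 0 < α) (hα2 : 1/α ≤ (2:ℝ)^((k:ℤ)+1))
    (hL0 : 0 < L) (hlog2 : 1 + L ≤ (k:ℝ)+2) (hk : k < 3*(m+1)) :
    ((2:ℝ)^(3*(m+1)+1) * ((3*(m+1):ℝ)+1)^m)⁻¹ * (1/α) * (1 + L)^m ≤ 1 := by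
  set c : ℝ := ((2:ℝ)^(3*(m+1)+1) * ((3*(m+1):ℝ)+1)^m)⁻¹ with hc
  have hc0 : 0 < c := by positivity
  have hkc : k + 1 ≤ 3*(m+1) := by omega
  have h1 : 1/α ≤ (2:ℝ)^((3*(m+1) : ℤ)) :=
    hα2.trans (zpow_le_zpow_right₀ one_le_two (by exact_mod_cast hkc))
  have h2 : (1 + L)^m ≤ ((3*(m+1):ℝ)+1)^m := by
    apply pow_le_pow_left₀ (by positivity)
    have hn2 : k + 2 ≤ 3*(m+1) + 1 := by omega
    have : (k:ℝ) + 2 ≤ (3*(m+1):ℝ) + 1 := by exact_mod_cast hn2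
    linarith
  have h3 : c * (1/α) * (1 + L)^m ≤ c * (2:ℝ)^((3*(m+1) : ℤ)) * ((3*(m+1):ℝ)+1)^m := by
    have hα : 0 < 1/α := by positivity
    gcongr
  refine h3.trans ?_
  rw [hc]
  rw [show ((2:ℝ))^((3*(m+1) : ℤ)) = (2:ℝ)^((3*(m+1) : ℕ)) from by
    rw [← zpow_natCast]; norm_num]
  have hA : (0:ℝ) < ((3*(m+1):ℝ)+1)^m := by positivity
  rw [pow_succ]
  have heq : ((2:ℝ)^(3*(m+1)) * 2 * ((3*(m+1):ℝ)+1)^m)⁻¹ * (2:ℝ)^(3*(m+1))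
      * ((3*(m+1):ℝ)+1)^m = 1/2 := by
    field_simp
  rw [heq]
  norm_num

lemma creal_main_aux (m k q : ℕ) (α L VE : ℝ) (hα0 : 0 < α)
    (hα2 : 1/α ≤ (2:ℝ)^((k:ℤ)+1)) (hL0 : 0 < L) (hlog2 : 1 + L ≤ (k:ℝ)+2)
    (hVE0 : 0 < VE) (hq3 : (k:ℝ) + 2 ≤ 3*((m:ℝ)+1)*(q:ℝ)) (hk : 3*(m+1) ≤ k) :
    ((2:ℝ)^(3*(m+1)+1) * ((3*(m+1):ℝ)+1)^m)⁻¹ * (1/α) * (1 + L)^m * VE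
      ≤ (q:ℝ)^m * (VE * (2:ℝ)^((k:ℤ) - (m+1))) := by
  set c : ℝ := ((2:ℝ)^(3*(m+1)+1) * ((3*(m+1):ℝ)+1)^m)⁻¹ with hc
  have hc0 : 0 < c := by positivity
  have hstep1 : c * (1/α) * (1 + L)^m * VE
      ≤ c * (2:ℝ)^((k:ℤ)+1) * ((k:ℝ)+2)^m * VE := by
    have hα : 0 < 1/α := by positivity
    gcongr
  refine hstep1.trans ?_
  have hstep2 : ((k:ℝ)+2)^m ≤ (3*((m:ℝ)+1))^m * (q:ℝ)^m := by
    rw [← mul_pow]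
    exact pow_le_pow_left₀ (by positivity) hq3 m
  have hstep3 : c * (2:ℝ)^((k:ℤ)+1) * ((k:ℝ)+2)^m * VE
      ≤ c * (2:ℝ)^((k:ℤ)+1) * ((3*((m:ℝ)+1))^m * (q:ℝ)^m) * VE := by
    gcongr
  refine hstep3.trans ?_
  have hkey : c * ((2:ℝ)^((k:ℤ)+1) * (3*((m:ℝ)+1))^m) ≤ (2:ℝ)^((k:ℤ) - (m+1)) := by
    have hbig : (2:ℝ)^((k:ℤ)+1) * (3*((m:ℝ)+1))^m
        ≤ ((2:ℝ)^(3*(m+1)+1) * ((3*(m+1):ℝ)+1)^m) * (2:ℝ)^((k:ℤ) - (m+1)) := by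
      rw [show ((2:ℝ)^(3*(m+1)+1) * ((3*(m+1):ℝ)+1)^m) * (2:ℝ)^((k:ℤ) - (m+1))
          = ((2:ℝ)^(3*(m+1)+1) * (2:ℝ)^((k:ℤ) - (m+1))) * ((3*(m+1):ℝ)+1)^m from by ring]
      have e1 : (2:ℝ)^(3*(m+1)+1) * (2:ℝ)^((k:ℤ) - (m+1))
          = (2:ℝ)^(((3*(m+1)+1 : ℕ) : ℤ) + ((k:ℤ) - (m+1))) := by
        rw [zpow_add₀ two_ne_zero, zpow_natCast]
      rw [e1]
      have e2 : (2:ℝ)^((k:ℤ)+1) ≤ (2:ℝ)^(((3*(m+1)+1 : ℕ) : ℤ) + ((k:ℤ) - (m+1))) :=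
        zpow_le_zpow_right₀ one_le_two (by push_cast; omega)
      have e3 : (3*((m:ℝ)+1))^m ≤ ((3*(m+1):ℝ)+1)^m := by
        apply pow_le_pow_left₀ (by positivity)
        push_cast
        linarith
      have e4 : (0:ℝ) < (2:ℝ)^(((3*(m+1)+1 : ℕ) : ℤ) + ((k:ℤ) - (m+1))) := by positivity
      nlinarith [pow_nonneg (by positivity : (0:ℝ) ≤ 3*((m:ℝ)+1)) m]
    calc c * ((2:ℝ)^((k:ℤ)+1) * (3*((m:ℝ)+1))^m)
        ≤ c * (((2:ℝ)^(3*(m+1)+1) * ((3*(m+1):ℝ)+1)^m) * (2:ℝ)^((k:ℤ) - (m+1))) := by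
          gcongr
      _ = (2:ℝ)^((k:ℤ) - (m+1)) := by
          rw [hc]
          field_simp
  calc c * (2:ℝ)^((k:ℤ)+1) * ((3*((m:ℝ)+1))^m * (q:ℝ)^m) * VE
      = (c * ((2:ℝ)^((k:ℤ)+1) * (3*((m:ℝ)+1))^m)) * ((q:ℝ)^m * VE) := by ring
    _ ≤ (2:ℝ)^((k:ℤ) - (m+1)) * ((q:ℝ)^m * VE) := by
        gcongr
    _ = (q:ℝ)^m * (VE * (2:ℝ)^((k:ℤ) - (m+1))) := by ring

/-- Application I: sharp lower bound for the basis of all boxes with side lengths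
`2^{s₁},…,2^{sₙ}`, `sⱼ ∈ Sⱼ`. -/
theorem statement9 (n : ℕ) (hn : 1 ≤ n) (S : Fin n → Set ℤ) (hS : ∀ j, (S j).Infinite)
    (B : Set (BoxInterval n))
    (hBdef : B = {R | ∀ j, ∃ s ∈ S j, R.side j = (2:ℝ) ^ s}) :
    ∃ c : ℝ, 0 < c ∧ ∀ α : ℝ, 0 < α → α < 1 →
      ∃ E : Set (Fin n → ℝ), Bornology.IsBounded E ∧ MeasurableSet E ∧ 0 < volume E ∧
        ENNReal.ofReal (c * (1 / α) * (1 + Real.logb 2 (1 / α)) ^ (n - 1)) * volume E ≤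
          volume {x | ENNReal.ofReal α < maxOp B (E.indicator fun _ => (1:ℝ)) x} := by
  obtain ⟨m, rfl⟩ : ∃ m, n = m + 1 := ⟨n - 1, by omega⟩
  refine ⟨((2:ℝ)^(3*(m+1)+1) * ((3*(m+1):ℝ)+1)^m)⁻¹, by positivity, ?_⟩
  set c : ℝ := ((2:ℝ)^(3*(m+1)+1) * ((3*(m+1):ℝ)+1)^m)⁻¹ with hc
  have hc0 : 0 < c := by positivity
  intro α hα0 hα1
  obtain ⟨k, hαk, hα2, hLk, hL0⟩ := alpha_pow_bounds hα0 hα1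
  have hm1 : (m + 1 : ℕ) - 1 = m := by omega
  rw [hm1]
  have hlog2 : 1 + Real.logb 2 (1/α) ≤ (k:ℝ) + 2 := by linarith
  by_cases hcase : k < 3*(m+1)
  · -- small case
    choose t ht using fun j : Fin (m+1) => (hS j).nonempty
    set E : Set (Fin (m+1) → ℝ) := Set.univ.pi fun j => Set.Icc 0 ((2:ℝ)^(t j)) with hE
    have hEmeas : MeasurableSet E := MeasurableSet.univ_pi fun _ => measurableSet_Icc
    have hEbd : Bornology.IsBounded E := Bornology.IsBounded.pi fun j => Metric.isBounded_Icc _ _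
    have hEvol : volume E = ENNReal.ofReal (∏ j, (2:ℝ)^(t j)) := by
      rw [hE, volume_pi_pi, ENNReal.ofReal_prod_of_nonneg (fun i _ => by positivity)]
      refine Finset.prod_congr rfl fun j _ => ?_
      rw [Real.volume_Icc, sub_zero]
    have hP0 : (0:ℝ) < ∏ j, (2:ℝ)^(t j) := Finset.prod_pos fun j _ => by positivity
    set R0 : BoxInterval (m+1) :=
      ⟨fun _ => 0, fun j => (2:ℝ)^(t j), fun j => by positivity⟩ with hR0
    have hR0set : R0.toSet = E := by
      rw [BoxInterval.toSet, hE]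
    have hR0B : R0 ∈ B := by
      rw [hBdef]
      intro j
      exact ⟨t j, ht j, by simp [hR0, BoxInterval.side]⟩
    have hsub : E ⊆ {x | ENNReal.ofReal α < maxOp B (E.indicator fun _ => (1:ℝ)) x} := by
      intro x hx
      have hxR : x ∈ R0.toSet := by rw [hR0set]; exact hx
      have hmax := le_maxOp_aux B (E.indicator fun _ => (1:ℝ)) x R0 hR0B hxR
      rw [lintegral_indicator_inter hEmeas (box_toSet_measurable R0), hR0set,
        Set.inter_self] at hmax
      have hratio : volume E / volume E = 1 :=
        ENNReal.div_self (by rw [hEvol]; exact (ENNReal.ofReal_pos.mpr hP0).ne')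
          (by rw [hEvol]; exact ENNReal.ofReal_ne_top)
      simp only [Set.mem_setOf_eq]
      calc ENNReal.ofReal α < 1 := ENNReal.ofReal_lt_one.mpr hα1
        _ = volume E / volume E := hratio.symm
        _ ≤ _ := hmax
    refine ⟨E, hEbd, hEmeas, by rw [hEvol]; exact ENNReal.ofReal_pos.mpr hP0, ?_⟩
    have hreal : c * (1/α) * (1 + Real.logb 2 (1/α))^m ≤ 1 := by
      rw [hc]
      exact creal_small_aux m k α _ hα0 hα2 hL0 hlog2 hcase
    calc ENNReal.ofReal (c * (1/α) * (1 + Real.logb 2 (1/α))^m) * volume E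
        ≤ 1 * volume E := by
          gcongr
          exact ENNReal.ofReal_le_one.mpr hreal
      _ = volume E := one_mul _
      _ ≤ _ := measure_mono hsub
  · -- main case
    push_neg at hcase
    choose T hTsub hTcard using fun j : Fin (m+1) => (hS j).exists_subset_card_eq (k+1)
    set σ : Fin (m+1) → ℕ → ℤ :=
      fun j i => (((T j).orderIsoOfFin (hTcard j)) ⟨min i k, by omega⟩ : ℤ) with hσ
    have hσS : ∀ j i, σ j i ∈ S j := fun j i =>
      hTsub j (((T j).orderIsoOfFin (hTcard j)) ⟨min i k, by omega⟩).2
    have hσmono : ∀ j, ∀ i, i < k → σ j i < σ j (i+1) := by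
      intro j i hi
      have hlt : (⟨min i k, by omega⟩ : Fin (k+1)) < ⟨min (i+1) k, by omega⟩ := by
        simp only [Fin.lt_def]
        omega
      have := ((T j).orderIsoOfFin (hTcard j)).strictMono hlt
      exact_mod_cast this
    set E : Set (Fin (m+1) → ℝ) := Set.univ.pi fun j => Vset (σ j) 0 k with hE
    have hEmeas : MeasurableSet E := MeasurableSet.univ_pi fun j => Vset_measurable _ _ _
    have hEbd : Bornology.IsBounded E := by
      refine Bornology.IsBounded.subset
        (Bornology.IsBounded.pi (fun j => Metric.isBounded_Icc 0 ((2:ℝ)^(σ j k)))) ?_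
      refine Set.pi_mono fun j _ => ?_
      exact (Vset_subset (σ j) (hσmono j) (Nat.zero_le k)).trans Set.Ico_subset_Icc_self
    set VE : ℝ := ∏ j, (2:ℝ)^(σ j k - (k:ℤ)) with hVE
    have hVE0 : 0 < VE := Finset.prod_pos fun j _ => by positivity
    have hEvol : volume E = ENNReal.ofReal VE := by
      rw [hE, hVE, ENNReal.ofReal_prod_of_nonneg (fun j _ => by positivity), volume_pi_pi]
      refine Finset.prod_congr rfl fun j _ => ?_
      rw [Vset_volume (σ j) (hσmono j) (Nat.zero_le k)]
      norm_num
    set Lam := (Fintype.piFinset (fun _ : Fin (m+1) => Finset.range (k+1))).filter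
      (fun lam => (∀ j, 1 ≤ lam j) ∧ ∑ j, lam j = k) with hLam
    have hLamBound : ∀ lam ∈ Lam, (∀ j, 1 ≤ lam j) ∧ (∀ j, lam j ≤ k) ∧ ∑ j, lam j = k := by
      intro lam hlam
      rw [hLam, Finset.mem_filter] at hlam
      refine ⟨hlam.2.1, fun j => ?_, hlam.2.2⟩
      have := Fintype.mem_piFinset.mp hlam.1 j
      rw [Finset.mem_range] at this
      omega
    set Q : (Fin (m+1) → ℕ) → Set (Fin (m+1) → ℝ) := fun lam =>
      Set.univ.pi fun j => Vset (σ j) (lam j) k \ Vset (σ j) (lam j - 1) k with hQ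
    have hQmeas : ∀ lam, MeasurableSet (Q lam) := fun lam =>
      MeasurableSet.univ_pi fun j => (Vset_measurable _ _ _).diff (Vset_measurable _ _ _)
    have hQsub : ∀ lam ∈ Lam,
        Q lam ⊆ {x | ENNReal.ofReal α < maxOp B (E.indicator fun _ => (1:ℝ)) x} := by
      intro lam hlam x hx
      obtain ⟨hl1, hlk, hlsum⟩ := hLamBound lam hlam
      rw [hQ, Set.mem_univ_pi] at hx
      have hxj : ∀ j, x j ∈ Vset (σ j) (lam j) k := fun j => (hx j).1
      choose xv hxv0 hxvle hxvmem hxvvol using fun j =>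
        Vset_block (σ j) (hσmono j) (hlk j) (hxj j)
      set R : BoxInterval (m+1) := ⟨xv, fun j => xv j + (2:ℝ)^(σ j (lam j)), fun j => by
        have h : (0:ℝ) < (2:ℝ)^(σ j (lam j)) := by positivity
        show xv j < xv j + (2:ℝ)^(σ j (lam j))
        linarith⟩ with hR
      have hRB : R ∈ B := by
        rw [hBdef]
        intro j
        exact ⟨σ j (lam j), hσS j _, by simp [hR, BoxInterval.side]⟩
      have hxR : x ∈ R.toSet := by
        rw [BoxInterval.toSet, Set.mem_univ_pi]
        exact fun j => Set.Ico_subset_Icc_self (hxvmem j)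
      set PR : ℝ := ∏ j, (2:ℝ)^(σ j (lam j)) with hPR
      have hPR0 : 0 < PR := Finset.prod_pos fun j _ => by positivity
      have hRvol : volume R.toSet = ENNReal.ofReal PR := by
        rw [BoxInterval.toSet, volume_pi_pi, hPR,
          ENNReal.ofReal_prod_of_nonneg (fun j _ => by positivity)]
        refine Finset.prod_congr rfl fun j _ => ?_
        rw [Real.volume_Icc]
        congr 1
        simp [hR]
      have hprodeq : ∏ j, (2:ℝ)^(σ j (lam j) - (lam j : ℤ)) = (2:ℝ)^(-(k:ℤ)) * PR := by
        rw [hPR, prod_zpow_sum _ two_ne_zero, prod_zpow_sum _ two_ne_zero,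
          ← zpow_add₀ two_ne_zero]
        congr 1
        rw [Finset.sum_sub_distrib]
        have hsl : ∑ j, (lam j : ℤ) = (k : ℤ) := by exact_mod_cast hlsum
        rw [hsl]
        ring
      have hER : ENNReal.ofReal ((2:ℝ)^(-(k:ℤ)) * PR) ≤ volume (E ∩ R.toSet) := by
        have hsub2 : (Set.univ.pi fun j =>
            Vset (σ j) 0 k ∩ Set.Ico (xv j) (xv j + (2:ℝ)^(σ j (lam j)))) ⊆ E ∩ R.toSet := by
          intro z hz
          rw [Set.mem_univ_pi] at hz
          constructor
          · rw [hE, Set.mem_univ_pi]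
            exact fun j => (hz j).1
          · rw [BoxInterval.toSet, Set.mem_univ_pi]
            exact fun j => Set.Ico_subset_Icc_self (hz j).2
        refine le_trans (le_of_eq ?_) (measure_mono hsub2)
        rw [volume_pi_pi, ← hprodeq,
          ENNReal.ofReal_prod_of_nonneg (fun j _ => by positivity)]
        exact (Finset.prod_congr rfl fun j _ => (hxvvol j)).symm
      have hαlt : ENNReal.ofReal α < volume (E ∩ R.toSet) / volume R.toSet := by
        rw [hRvol, ENNReal.lt_div_iff_mul_lt
          (Or.inl (ENNReal.ofReal_pos.mpr hPR0).ne') (Or.inl ENNReal.ofReal_ne_top)]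
        calc ENNReal.ofReal α * ENNReal.ofReal PR = ENNReal.ofReal (α * PR) :=
              (ENNReal.ofReal_mul hα0.le).symm
          _ < ENNReal.ofReal ((2:ℝ)^(-(k:ℤ)) * PR) := by
              rw [ENNReal.ofReal_lt_ofReal_iff (by positivity)]
              exact mul_lt_mul_of_pos_right hαk hPR0
          _ ≤ volume (E ∩ R.toSet) := hER
      simp only [Set.mem_setOf_eq]
      refine lt_of_lt_of_le hαlt ?_
      have hmax := le_maxOp_aux B (E.indicator fun _ => (1:ℝ)) x R hRB hxR
      rwa [lintegral_indicator_inter hEmeas (box_toSet_measurable R)] at hmax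
    have hQdisj : (↑Lam : Set (Fin (m+1) → ℕ)).PairwiseDisjoint Q := by
      intro l1 h1 l2 h2 hne
      have hex : ∃ j, l1 j ≠ l2 j := by
        by_contra h
        push_neg at h
        exact hne (funext h)
      obtain ⟨j, hj⟩ := hex
      have key : ∀ p r : Fin (m+1) → ℕ, p ∈ Lam → r ∈ Lam → p j < r j →
          Disjoint (Q p) (Q r) := by
        intro p r hp hr hpr
        refine Set.disjoint_left.mpr fun z hzp hzr => ?_
        rw [hQ, Set.mem_univ_pi] at hzp hzr
        exact (hzr j).2 (Vset_mono (σ j) (hσmono j) (by omega)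
          (by have := (hLamBound r hr).2.1 j; omega) (hzp j).1)
      rcases lt_or_gt_of_ne hj with h | h
      · exact key l1 l2 h1 h2 h
      · exact (key l2 l1 h2 h1 h).symm
    have hQvol : ∀ lam ∈ Lam,
        volume (Q lam) = ENNReal.ofReal (VE * (2:ℝ)^((k:ℤ) - (m+1))) := by
      intro lam hlam
      obtain ⟨hl1, hlk, hlsum⟩ := hLamBound lam hlam
      have hjvol : ∀ j, volume (Vset (σ j) (lam j) k \ Vset (σ j) (lam j - 1) k)
          = ENNReal.ofReal ((2:ℝ)^((σ j k - (k:ℤ)) + ((lam j:ℤ) - 1))) := by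
        intro j
        have hlkj := hlk j
        have hl1j := hl1 j
        have hsub1 : lam j - 1 ≤ lam j := by omega
        rw [measure_diff (Vset_mono (σ j) (hσmono j) hsub1 (hlk j))
            (Vset_measurable _ _ _).nullMeasurableSet
            (by rw [Vset_volume (σ j) (hσmono j) (by omega : lam j - 1 ≤ k)]
                exact ENNReal.ofReal_ne_top),
          Vset_volume (σ j) (hσmono j) (hlk j),
          Vset_volume (σ j) (hσmono j) (by omega : lam j - 1 ≤ k),
          ← ENNReal.ofReal_sub _ (by positivity)]
        congr 1
        have hcast : ((lam j - 1 : ℕ) : ℤ) = (lam j : ℤ) - 1 := by omega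
        rw [hcast]
        rw [show σ j k - ((k:ℤ) - ((lam j:ℤ) - 1))
            = ((σ j k - (k:ℤ)) + ((lam j:ℤ) - 1)) from by ring]
        rw [show σ j k - ((k:ℤ) - (lam j:ℤ))
            = ((σ j k - (k:ℤ)) + ((lam j:ℤ) - 1)) + 1 from by ring]
        rw [zpow_add₀ two_ne_zero]
        ring
      rw [hQ, volume_pi_pi, Finset.prod_congr rfl (fun j _ => hjvol j),
        ← ENNReal.ofReal_prod_of_nonneg (fun j _ => by positivity)]
      congr 1
      rw [hVE, prod_zpow_sum _ two_ne_zero, prod_zpow_sum _ two_ne_zero,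
        ← zpow_add₀ two_ne_zero]
      congr 1
      have hsl : ∑ j, (lam j : ℤ) = (k : ℤ) := by exact_mod_cast hlsum
      have hsl2 : ∑ j : Fin (m+1), ((lam j : ℤ) - 1) = (k:ℤ) - (m+1) := by
        rw [Finset.sum_sub_distrib, hsl]
        simp [Finset.card_univ]
      rw [Finset.sum_add_distrib, hsl2]
    set q : ℕ := if m = 0 then k else (k - (m+1)) / m with hq
    have hq1 : 1 ≤ q := by
      rw [hq]
      rcases Nat.eq_zero_or_pos m with rfl | hm0
      · simp; omega
      · rw [if_neg (by omega)]
        rw [Nat.one_le_div_iff hm0]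
        omega
    have hqk : q ≤ k := by
      rw [hq]
      rcases Nat.eq_zero_or_pos m with rfl | hm0
      · simp
      · rw [if_neg (by omega)]
        exact (Nat.div_le_self _ _).trans (by omega)
    have hsumq : m * q + 1 ≤ k := by
      rw [hq]
      rcases Nat.eq_zero_or_pos m with rfl | hm0
      · simp; omega
      · rw [if_neg (by omega)]
        have := Nat.div_mul_le_self (k - (m+1)) m
        have h2 : m * ((k - (m+1)) / m) ≤ k - (m+1) := by
          rw [mul_comm]; exact this
        omega
    have hq3 : (k:ℝ) + 2 ≤ 3*((m:ℝ)+1)*(q:ℝ) := by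
      rcases Nat.eq_zero_or_pos m with rfl | hm0
      · have : q = k := by simp [hq]
        rw [this]
        push_cast
        have : (3:ℝ) ≤ k := by exact_mod_cast (by omega : 3 ≤ k)
        nlinarith
      · have hqdef : q = (k - (m+1)) / m := by rw [hq, if_neg (by omega)]
        obtain ⟨M, hM⟩ : ∃ M, M = m * ((k - (m+1)) / m) := ⟨_, rfl⟩
        have hdm : M + (k - (m+1)) % m = k - (m+1) := by
          rw [hM]; exact Nat.div_add_mod _ _
        have hmod : (k - (m+1)) % m < m := Nat.mod_lt _ hm0
        have hkm : m + 1 ≤ k := by omega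
        have hklow : k ≤ m * q + 2*m + 1 := by
          rw [hqdef, ← hM]
          omega
        have hcast1 : (k:ℝ) ≤ (m:ℝ) * (q:ℝ) + 2*(m:ℝ) + 1 := by exact_mod_cast hklow
        have hcast2 : 3*((m:ℝ)+1) ≤ (k:ℝ) := by exact_mod_cast (by omega : 3*(m+1) ≤ k)
        have hq1' : (1:ℝ) ≤ (q:ℝ) := by exact_mod_cast hq1
        nlinarith
    have hcard : q ^ m ≤ Lam.card := lambda_card m k q hq1 hsumq hqk
    set CQ : ℝ≥0∞ := ENNReal.ofReal (VE * (2:ℝ)^((k:ℤ) - (m+1))) with hCQ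
    have hUnion : volume (⋃ lam ∈ Lam, Q lam) = Lam.card • CQ := by
      rw [measure_biUnion_finset hQdisj (fun lam _ => hQmeas lam),
        Finset.sum_congr rfl hQvol, Finset.sum_const]
    refine ⟨E, hEbd, hEmeas, by rw [hEvol]; exact ENNReal.ofReal_pos.mpr hVE0, ?_⟩
    have hsuper : ((q:ℝ≥0∞))^m * CQ
        ≤ volume {x | ENNReal.ofReal α < maxOp B (E.indicator fun _ => (1:ℝ)) x} := by
      calc ((q:ℝ≥0∞))^m * CQ ≤ (Lam.card : ℝ≥0∞) * CQ := by
            gcongr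
            have : ((q^m : ℕ) : ℝ≥0∞) ≤ ((Lam.card : ℕ) : ℝ≥0∞) := by exact_mod_cast hcard
            push_cast at this
            exact this
        _ = Lam.card • CQ := (nsmul_eq_mul _ _).symm
        _ = volume (⋃ lam ∈ Lam, Q lam) := hUnion.symm
        _ ≤ _ := measure_mono (Set.iUnion₂_subset hQsub)
    have hqQ : ((q:ℝ≥0∞))^m * CQ = ENNReal.ofReal ((q:ℝ)^m * (VE * (2:ℝ)^((k:ℤ) - (m+1)))) := by
      rw [hCQ, ENNReal.ofReal_mul (by positivity : (0:ℝ) ≤ (q:ℝ)^m)]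
      congr 1
      rw [ENNReal.ofReal_pow (by positivity : (0:ℝ) ≤ (q:ℝ)) m, ENNReal.ofReal_natCast]
    have hreal : c * (1/α) * (1 + Real.logb 2 (1/α))^m * VE
        ≤ (q:ℝ)^m * (VE * (2:ℝ)^((k:ℤ) - (m+1))) := by
      rw [hc]
      exact creal_main_aux m k q α _ VE hα0 hα2 hL0 hlog2 hVE0 hq3 hcase
    calc ENNReal.ofReal (c * (1/α) * (1 + Real.logb 2 (1/α))^m) * volume E
        = ENNReal.ofReal (c * (1/α) * (1 + Real.logb 2 (1/α))^m * VE) := by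
          rw [hEvol, ← ENNReal.ofReal_mul (by positivity)]
      _ ≤ ((q:ℝ≥0∞))^m * CQ := by
          rw [hqQ]
          exact ENNReal.ofReal_le_ofReal hreal
      _ ≤ _ := hsuper

end
end
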